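/- arXiv:1711.05347 — 6 statements merged into one kernel-verified Lean document; each statement's English description precedes it below -/
import Mathlib

section
/- Fix an integer k ≥ 2. Consider the six vector fields on ℝ² given by V₁(x,y) = (1,0), V₂(x,y) = (x,0), V₃(x,y) = (0,y), V₄(x,y) = ((k−1)x², −x y), V₅(x,y) = (0, y^k), V₆(x,y) = (0, x y^k). Then V₁,…,V₆ are linearly independent over ℝ (as functions ℝ² → ℝ²), and their ℝ-linear span is closed under the Lie bracket of vector fields; in particular this span is a 6-dimensional real Lie algebra of vector fields (the point symmetry algebra of the ODE y y″ = k (y′)²). -/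
open Module ContinuousLinearMap

lemma hasSndPow (k : ℕ) (p : ℝ × ℝ) :
    HasFDerivAt (fun q : ℝ × ℝ => q.2 ^ k) (((k:ℝ) * p.2 ^ (k-1)) • (snd ℝ ℝ ℝ)) p := by
  have := (hasDerivAt_pow k p.2).comp_hasFDerivAt p (hasFDerivAt_snd : HasFDerivAt _ (snd ℝ ℝ ℝ) p)
  simpa [Function.comp_def] using this

lemma hasD1 (p : ℝ × ℝ) :
    HasFDerivAt (fun _ : ℝ × ℝ => ((1:ℝ), (0:ℝ))) (0 : ℝ×ℝ →L[ℝ] ℝ×ℝ) p :=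
  hasFDerivAt_const _ _

lemma hasD2 (p : ℝ × ℝ) :
    HasFDerivAt (fun q : ℝ × ℝ => (q.1, (0:ℝ))) ((fst ℝ ℝ ℝ).prod 0) p :=
  hasFDerivAt_fst.prodMk (hasFDerivAt_const _ _)

lemma hasD3 (p : ℝ × ℝ) :
    HasFDerivAt (fun q : ℝ × ℝ => ((0:ℝ), q.2)) ((0 : ℝ×ℝ →L[ℝ] ℝ).prod (snd ℝ ℝ ℝ)) p :=
  (hasFDerivAt_const _ _).prodMk hasFDerivAt_snd

lemma hasD4 (k : ℕ) (p : ℝ × ℝ) :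
    HasFDerivAt (fun q : ℝ × ℝ => (((k:ℝ) - 1) * q.1 ^ 2, -(q.1 * q.2)))
      ((((k:ℝ) - 1) • (((2:ℝ) * p.1) • (fst ℝ ℝ ℝ))).prod
        (-(p.1 • (snd ℝ ℝ ℝ) + p.2 • (fst ℝ ℝ ℝ)))) p := by
  have h1 : HasFDerivAt (fun q : ℝ × ℝ => q.1 ^ 2) (((2:ℝ) * p.1) • (fst ℝ ℝ ℝ)) p := by
    have := (hasDerivAt_pow 2 p.1).comp_hasFDerivAt p (hasFDerivAt_fst : HasFDerivAt _ (fst ℝ ℝ ℝ) p)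
    simpa [Function.comp_def] using this
  exact (h1.const_mul _).prodMk ((hasFDerivAt_fst.mul hasFDerivAt_snd).neg)

lemma hasD5 (k : ℕ) (p : ℝ × ℝ) :
    HasFDerivAt (fun q : ℝ × ℝ => ((0:ℝ), q.2 ^ k))
      ((0 : ℝ×ℝ →L[ℝ] ℝ).prod (((k : ℝ) * p.2 ^ (k - 1)) • (snd ℝ ℝ ℝ))) p :=
  (hasFDerivAt_const _ _).prodMk (hasSndPow k p)

lemma hasD6 (k : ℕ) (p : ℝ × ℝ) :
    HasFDerivAt (fun q : ℝ × ℝ => ((0:ℝ), q.1 * q.2 ^ k))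
      ((0 : ℝ×ℝ →L[ℝ] ℝ).prod
        (p.1 • (((k : ℝ) * p.2 ^ (k - 1)) • (snd ℝ ℝ ℝ)) + (p.2 ^ k) • (fst ℝ ℝ ℝ))) p :=
  (hasFDerivAt_const _ _).prodMk (hasFDerivAt_fst.mul (hasSndPow k p))

lemma lb_apply {A B : ℝ × ℝ → ℝ × ℝ} {A' B' : ℝ×ℝ →L[ℝ] ℝ×ℝ} {p : ℝ × ℝ}
    (hA : HasFDerivAt A A' p) (hB : HasFDerivAt B B' p) :
    VectorField.lieBracket ℝ A B p = B' (A p) - A' (B p) := by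
  simp [VectorField.lieBracket, hA.fderiv, hB.fderiv]

/-- The six vector fields `∂ₓ, x∂ₓ, y∂_y, (k−1)x²∂ₓ − xy∂_y, y^k∂_y, xy^k∂_y`
(point symmetries of the ODE `y y″ = k (y′)²`, `k ≥ 2`) are linearly independent
and their span is closed under the Lie bracket of vector fields, hence forms a
6-dimensional real Lie algebra of vector fields. -/
theorem symmetry_algebra_of_yy''_eq_k_y'sq (k : ℕ) (hk : 2 ≤ k)
    (V : Fin 6 → (ℝ × ℝ → ℝ × ℝ))
    (hV : V = ![fun _ => (1, 0),
                fun p => (p.1, 0),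
                fun p => (0, p.2),
                fun p => (((k : ℝ) - 1) * p.1 ^ 2, -(p.1 * p.2)),
                fun p => (0, p.2 ^ k),
                fun p => (0, p.1 * p.2 ^ k)]) :
    LinearIndependent ℝ V ∧
    (∀ A B : ℝ × ℝ → ℝ × ℝ, A ∈ Submodule.span ℝ (Set.range V) →
      B ∈ Submodule.span ℝ (Set.range V) →
      VectorField.lieBracket ℝ A B ∈ Submodule.span ℝ (Set.range V)) ∧
    Module.finrank ℝ (Submodule.span ℝ (Set.range V)) = 6 := by
  have h0 : V 0 = fun _ : ℝ × ℝ => ((1:ℝ), (0:ℝ)) := by rw [hV]; rfl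
  have h1 : V 1 = fun q : ℝ × ℝ => (q.1, (0:ℝ)) := by rw [hV]; rfl
  have h2 : V 2 = fun q : ℝ × ℝ => ((0:ℝ), q.2) := by rw [hV]; rfl
  have h3 : V 3 = fun q : ℝ × ℝ => (((k:ℝ) - 1) * q.1 ^ 2, -(q.1 * q.2)) := by rw [hV]; rfl
  have h4 : V 4 = fun q : ℝ × ℝ => ((0:ℝ), q.2 ^ k) := by rw [hV]; rfl
  have h5 : V 5 = fun q : ℝ × ℝ => ((0:ℝ), q.1 * q.2 ^ k) := by rw [hV]; rfl
  have hpow : ∀ y : ℝ, y ^ (k-1) * y = y ^ k := by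
    intro y; rw [← pow_succ]; congr 1; omega
  -- linear independence
  have hli : LinearIndependent ℝ V := by
    rw [Fintype.linearIndependent_iff]
    intro g hg
    have h2k : (4:ℝ) ≤ 2 ^ k := by
      calc (4:ℝ) = 2 ^ 2 := by norm_num
      _ ≤ 2 ^ k := by exact pow_le_pow_right₀ one_le_two hk
    have hz : (0:ℝ) ^ k = 0 := zero_pow (by omega)
    have ev : ∀ p : ℝ × ℝ,
        g 0 • V 0 p + g 1 • V 1 p + g 2 • V 2 p + g 3 • V 3 p + g 4 • V 4 p + g 5 • V 5 p
          = 0 := by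
      intro p
      have := congrFun hg p
      simpa [Fin.sum_univ_six] using this
    have e1 := ev (0,0)
    have e2 := ev (1,0)
    have e3 := ev (0,1)
    have e4 := ev (0,2)
    have e5 := ev (1,1)
    have e6 := ev (2,1)
    have e7 := ev (1,2)
    simp [h0, h1, h2, h3, h4, h5, Prod.ext_iff, hz, Prod.smul_mk] at e1 e2 e3 e4 e5 e6 e7
    obtain ⟨-, e3⟩ := e3
    obtain ⟨-, e4⟩ := e4
    obtain ⟨-, e5⟩ := e5
    obtain ⟨-, e6⟩ := e6
    obtain ⟨-, e7⟩ := e7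
    have hc : (2:ℝ) ^ k - 2 ≠ 0 := by intro h; linarith
    have hg4 : g 4 = 0 := by
      have h : ((2:ℝ) ^ k - 2) * g 4 = 0 := by linear_combination e4 - 2 * e3
      rcases mul_eq_zero.1 h with h | h
      · exact absurd h hc
      · exact h
    have hg2 : g 2 = 0 := by linarith
    have hg53 : g 5 = g 3 := by linarith
    have hg5 : g 5 = 0 := by
      have h : ((2:ℝ) ^ k - 2) * g 5 = 0 := by
        linear_combination e7 - 2 * e5 - ((2:ℝ) ^ k - 2) * hg4
      rcases mul_eq_zero.1 h with h | h
      · exact absurd h hc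
      · exact h
    have hg3 : g 3 = 0 := by linarith
    have hg1 : g 1 = 0 := by linear_combination e2 - e1 - ((k:ℝ) - 1) * hg3
    intro i
    fin_cases i <;> first | exact e1 | exact hg1 | exact hg2 | exact hg3 | exact hg4 | exact hg5
  refine ⟨hli, ?_, ?_⟩
  · intro A B hA hB
    set S := Submodule.span ℝ (Set.range V) with hS
    have hmem : ∀ i, V i ∈ S := fun i => Submodule.subset_span ⟨i, rfl⟩
    have hdV : ∀ i, Differentiable ℝ (V i) := by
      intro i
      fin_cases i
      · exact h0 ▸ fun p => (hasD1 p).differentiableAt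
      · exact h1 ▸ fun p => (hasD2 p).differentiableAt
      · exact h2 ▸ fun p => (hasD3 p).differentiableAt
      · exact h3 ▸ fun p => (hasD4 k p).differentiableAt
      · exact h4 ▸ fun p => (hasD5 k p).differentiableAt
      · exact h5 ▸ fun p => (hasD6 k p).differentiableAt
    have hdiffS : ∀ C : ℝ × ℝ → ℝ × ℝ, C ∈ S → Differentiable ℝ C := by
      intro C hC
      induction hC using Submodule.span_induction with
      | mem x hx => obtain ⟨i, rfl⟩ := hx; exact hdV i
      | zero => exact differentiable_const 0
      | add x y hx hy ihx ihy => exact ihx.add ihy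
      | smul a x hx ihx => exact ihx.const_smul a
    have diag : ∀ C : ℝ × ℝ → ℝ × ℝ, VectorField.lieBracket ℝ C C = 0 := by
      intro C; funext p; simp [VectorField.lieBracket]
    have anti : ∀ C D : ℝ × ℝ → ℝ × ℝ,
        VectorField.lieBracket ℝ D C = -VectorField.lieBracket ℝ C D := by
      intro C D; funext p; exact VectorField.lieBracket_swap
    have hb01 : VectorField.lieBracket ℝ (V 0) (V 1) ∈ S := by
      have e : VectorField.lieBracket ℝ (V 0) (V 1) = V 0 := by
        rw [h0, h1]; funext p; rw [lb_apply (hasD1 p) (hasD2 p)]; simp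
      rw [e]; exact hmem 0
    have hb02 : VectorField.lieBracket ℝ (V 0) (V 2) ∈ S := by
      have e : VectorField.lieBracket ℝ (V 0) (V 2) = 0 := by
        rw [h0, h2]; funext p; rw [lb_apply (hasD1 p) (hasD3 p)]; simp
      rw [e]; exact S.zero_mem
    have hb03 : VectorField.lieBracket ℝ (V 0) (V 3) ∈ S := by
      have e : VectorField.lieBracket ℝ (V 0) (V 3)
          = (2 * ((k:ℝ) - 1)) • V 1 - V 2 := by
        rw [h0, h1, h2, h3]; funext p; rw [lb_apply (hasD1 p) (hasD4 k p)]
        simp [Prod.ext_iff]; ring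
      rw [e]; exact sub_mem (Submodule.smul_mem S _ (hmem 1)) (hmem 2)
    have hb04 : VectorField.lieBracket ℝ (V 0) (V 4) ∈ S := by
      have e : VectorField.lieBracket ℝ (V 0) (V 4) = 0 := by
        rw [h0, h4]; funext p; rw [lb_apply (hasD1 p) (hasD5 k p)]; simp
      rw [e]; exact S.zero_mem
    have hb05 : VectorField.lieBracket ℝ (V 0) (V 5) ∈ S := by
      have e : VectorField.lieBracket ℝ (V 0) (V 5) = V 4 := by
        rw [h0, h4, h5]; funext p; rw [lb_apply (hasD1 p) (hasD6 k p)]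
        simp [Prod.ext_iff]
      rw [e]; exact hmem 4
    have hb12 : VectorField.lieBracket ℝ (V 1) (V 2) ∈ S := by
      have e : VectorField.lieBracket ℝ (V 1) (V 2) = 0 := by
        rw [h1, h2]; funext p; rw [lb_apply (hasD2 p) (hasD3 p)]; simp
      rw [e]; exact S.zero_mem
    have hb13 : VectorField.lieBracket ℝ (V 1) (V 3) ∈ S := by
      have e : VectorField.lieBracket ℝ (V 1) (V 3) = V 3 := by
        rw [h1, h3]; funext p; rw [lb_apply (hasD2 p) (hasD4 k p)]
        simp [Prod.ext_iff]; constructor <;> ring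
      rw [e]; exact hmem 3
    have hb14 : VectorField.lieBracket ℝ (V 1) (V 4) ∈ S := by
      have e : VectorField.lieBracket ℝ (V 1) (V 4) = 0 := by
        rw [h1, h4]; funext p; rw [lb_apply (hasD2 p) (hasD5 k p)]; simp
      rw [e]; exact S.zero_mem
    have hb15 : VectorField.lieBracket ℝ (V 1) (V 5) ∈ S := by
      have e : VectorField.lieBracket ℝ (V 1) (V 5) = V 5 := by
        rw [h1, h5]; funext p; rw [lb_apply (hasD2 p) (hasD6 k p)]
        simp [Prod.ext_iff]; ring
      rw [e]; exact hmem 5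
    have hb23 : VectorField.lieBracket ℝ (V 2) (V 3) ∈ S := by
      have e : VectorField.lieBracket ℝ (V 2) (V 3) = 0 := by
        rw [h2, h3]; funext p; rw [lb_apply (hasD3 p) (hasD4 k p)]
        simp [Prod.ext_iff]
      rw [e]; exact S.zero_mem
    have hb24 : VectorField.lieBracket ℝ (V 2) (V 4) ∈ S := by
      have e : VectorField.lieBracket ℝ (V 2) (V 4) = ((k:ℝ) - 1) • V 4 := by
        rw [h2, h4]; funext p; rw [lb_apply (hasD3 p) (hasD5 k p)]
        simp [Prod.ext_iff]
        linear_combination (k:ℝ) * hpow p.2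
      rw [e]; exact Submodule.smul_mem S _ (hmem 4)
    have hb25 : VectorField.lieBracket ℝ (V 2) (V 5) ∈ S := by
      have e : VectorField.lieBracket ℝ (V 2) (V 5) = ((k:ℝ) - 1) • V 5 := by
        rw [h2, h5]; funext p; rw [lb_apply (hasD3 p) (hasD6 k p)]
        simp [Prod.ext_iff]
        linear_combination ((k:ℝ) * p.1) * hpow p.2
      rw [e]; exact Submodule.smul_mem S _ (hmem 5)
    have hb34 : VectorField.lieBracket ℝ (V 3) (V 4) ∈ S := by
      have e : VectorField.lieBracket ℝ (V 3) (V 4) = (-((k:ℝ) - 1)) • V 5 := by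
        rw [h3, h4, h5]; funext p; rw [lb_apply (hasD4 k p) (hasD5 k p)]
        simp [Prod.ext_iff]
        linear_combination (-(k:ℝ) * p.1) * hpow p.2
      rw [e]; exact Submodule.smul_mem S _ (hmem 5)
    have hb35 : VectorField.lieBracket ℝ (V 3) (V 5) ∈ S := by
      have e : VectorField.lieBracket ℝ (V 3) (V 5) = 0 := by
        rw [h3, h5]; funext p; rw [lb_apply (hasD4 k p) (hasD6 k p)]
        simp [Prod.ext_iff]
        linear_combination (-(k:ℝ) * p.1 ^ 2) * hpow p.2
      rw [e]; exact S.zero_mem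
    have hb45 : VectorField.lieBracket ℝ (V 4) (V 5) ∈ S := by
      have e : VectorField.lieBracket ℝ (V 4) (V 5) = 0 := by
        rw [h4, h5]; funext p; rw [lb_apply (hasD5 k p) (hasD6 k p)]
        simp [Prod.ext_iff]; ring
      rw [e]; exact S.zero_mem
    have hbr : ∀ i j : Fin 6, VectorField.lieBracket ℝ (V i) (V j) ∈ S := by
      intro i j
      fin_cases i <;> fin_cases j
      · rw [diag]; exact S.zero_mem
      · exact hb01
      · exact hb02
      · exact hb03
      · exact hb04
      · exact hb05
      · rw [anti]; exact Submodule.neg_mem _ hb01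
      · rw [diag]; exact S.zero_mem
      · exact hb12
      · exact hb13
      · exact hb14
      · exact hb15
      · rw [anti]; exact Submodule.neg_mem _ hb02
      · rw [anti]; exact Submodule.neg_mem _ hb12
      · rw [diag]; exact S.zero_mem
      · exact hb23
      · exact hb24
      · exact hb25
      · rw [anti]; exact Submodule.neg_mem _ hb03
      · rw [anti]; exact Submodule.neg_mem _ hb13
      · rw [anti]; exact Submodule.neg_mem _ hb23
      · rw [diag]; exact S.zero_mem
      · exact hb34
      · exact hb35
      · rw [anti]; exact Submodule.neg_mem _ hb04
      · rw [anti]; exact Submodule.neg_mem _ hb14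
      · rw [anti]; exact Submodule.neg_mem _ hb24
      · rw [anti]; exact Submodule.neg_mem _ hb34
      · rw [diag]; exact S.zero_mem
      · exact hb45
      · rw [anti]; exact Submodule.neg_mem _ hb05
      · rw [anti]; exact Submodule.neg_mem _ hb15
      · rw [anti]; exact Submodule.neg_mem _ hb25
      · rw [anti]; exact Submodule.neg_mem _ hb35
      · rw [anti]; exact Submodule.neg_mem _ hb45
      · rw [diag]; exact S.zero_mem
    refine Submodule.span_induction₂
      (p := fun C D _ _ => VectorField.lieBracket ℝ C D ∈ S)
      ?_ ?_ ?_ ?_ ?_ ?_ ?_ hA hB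
    · rintro x y ⟨i, rfl⟩ ⟨j, rfl⟩; exact hbr i j
    · intro y hy
      have e : VectorField.lieBracket ℝ 0 y = 0 := by
        funext p
        simp [VectorField.lieBracket, Pi.zero_def, fderiv_const]
      rw [e]; exact S.zero_mem
    · intro x hx
      have e : VectorField.lieBracket ℝ x 0 = 0 := by
        funext p
        simp [VectorField.lieBracket, Pi.zero_def, fderiv_const]
      rw [e]; exact S.zero_mem
    · intro x y z hx hy hz ihx ihy
      have e : VectorField.lieBracket ℝ (x + y) z
          = VectorField.lieBracket ℝ x z + VectorField.lieBracket ℝ y z := by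
        funext p
        exact VectorField.lieBracket_add_left (hdiffS x hx p) (hdiffS y hy p)
      rw [e]; exact S.add_mem ihx ihy
    · intro x y z hx hy hz ihy ihz
      have e : VectorField.lieBracket ℝ x (y + z)
          = VectorField.lieBracket ℝ x y + VectorField.lieBracket ℝ x z := by
        funext p
        exact VectorField.lieBracket_add_right (hdiffS y hy p) (hdiffS z hz p)
      rw [e]; exact S.add_mem ihy ihz
    · intro r x y hx hy ih
      have e : VectorField.lieBracket ℝ (r • x) y = r • VectorField.lieBracket ℝ x y := by
        funext p
        exact VectorField.lieBracket_const_smul_left (hdiffS x hx p)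
      rw [e]; exact Submodule.smul_mem S r ih
    · intro r x y hx hy ih
      have e : VectorField.lieBracket ℝ x (r • y) = r • VectorField.lieBracket ℝ x y := by
        funext p
        exact VectorField.lieBracket_const_smul_right (hdiffS y hy p)
      rw [e]; exact Submodule.smul_mem S r ih
  · have := finrank_span_eq_card hli
    simpa using this
end

section
/- Fix t ∈ ℝ and let u : ℝ → ℝ be twice differentiable on an open interval I with u(x)·u″(x) = 2·(u′(x))² for all x ∈ I. Define v(x) = u( x/(1+tx) ) / (1+tx). Then for every x with 1+tx ≠ 0 and x/(1+tx) ∈ I, the function v is twice differentiable at x and satisfies v(x)·v″(x) = 2·(v′(x))². (This expresses that x²∂ₓ − x y ∂_y is a point symmetry of the ODE y y″ = 2 (y′)².) -/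
private lemma key1 (t A B w : ℝ) (hw : w ≠ 0) :
    B / w ^ 3 - t * A / w ^ 2 = (B * (1 / w ^ 2) * w - A * t) / w ^ 2 := by
  field_simp

private lemma key2 (t A B C w : ℝ) (hw : w ≠ 0) :
    C / w ^ 5 - 4 * t * B / w ^ 4 + 2 * t ^ 2 * A / w ^ 3 =
      (C * (1 / w ^ 2) * w ^ 3 - B * (3 * w ^ 2 * t)) / (w ^ 3) ^ 2 -
        t * ((B * (1 / w ^ 2) * w ^ 2 - A * (2 * w ^ 1 * t)) / (w ^ 2) ^ 2) := by
  field_simp; ring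

private lemma key3 (t A B C w : ℝ) (hw : w ≠ 0) (h : A * C = 2 * B ^ 2) :
    A / w * (C / w ^ 5 - 4 * t * B / w ^ 4 + 2 * t ^ 2 * A / w ^ 3)
      = 2 * (B / w ^ 3 - t * A / w ^ 2) ^ 2 := by
  field_simp
  linear_combination h

/-- `x²∂ₓ − xy∂_y` is a point symmetry of the ODE `y y″ = 2 (y′)²`: the
transformed solution `v(x) = u(x/(1+tx))/(1+tx)` again satisfies the equation. -/
theorem projective_symmetry_of_yy''_eq_2y'sq (t : ℝ) (a b : ℝ) (u : ℝ → ℝ)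
    (hu₁ : ∀ x ∈ Set.Ioo a b, DifferentiableAt ℝ u x)
    (hu₂ : ∀ x ∈ Set.Ioo a b, DifferentiableAt ℝ (deriv u) x)
    (hode : ∀ x ∈ Set.Ioo a b, u x * deriv (deriv u) x = 2 * (deriv u x) ^ 2)
    (v : ℝ → ℝ)
    (hv : v = fun x => u (x / (1 + t * x)) / (1 + t * x)) :
    ∀ x : ℝ, 1 + t * x ≠ 0 → x / (1 + t * x) ∈ Set.Ioo a b →
      DifferentiableAt ℝ v x ∧ DifferentiableAt ℝ (deriv v) x ∧
      v x * deriv (deriv v) x = 2 * (deriv v x) ^ 2 := by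
  intro x hwx hgx
  set g : ℝ → ℝ := fun y => y / (1 + t * y) with hgdef
  set V1 : ℝ → ℝ := fun y => deriv u (g y) / (1 + t * y) ^ 3 - t * u (g y) / (1 + t * y) ^ 2
    with hV1def
  have hwd : ∀ y : ℝ, HasDerivAt (fun z => 1 + t * z) t y := by
    intro y
    simpa using ((hasDerivAt_id y).const_mul t).const_add 1
  have hgd : ∀ y : ℝ, 1 + t * y ≠ 0 → HasDerivAt g (1 / (1 + t * y) ^ 2) y := by
    intro y hy
    have := (hasDerivAt_id y).fun_div (hwd y) hy
    exact this.congr_deriv (by congr 1; simp only [id]; ring)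
  have hv1 : ∀ y : ℝ, 1 + t * y ≠ 0 → g y ∈ Set.Ioo a b → HasDerivAt v (V1 y) y := by
    intro y hy hgy
    have hud : HasDerivAt u (deriv u (g y)) (g y) := (hu₁ _ hgy).hasDerivAt
    have comp : HasDerivAt (fun z => u (g z)) (deriv u (g y) * (1 / (1 + t * y) ^ 2)) y :=
      hud.comp y (hgd y hy)
    have := comp.fun_div (hwd y) hy
    rw [hv]
    exact this.congr_deriv (key1 t (u (g y)) (deriv u (g y)) _ hy).symm
  have hSopen : IsOpen {y : ℝ | 1 + t * y ≠ 0 ∧ g y ∈ Set.Ioo a b} := by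
    have h1 : IsOpen {y : ℝ | 1 + t * y ≠ 0} :=
      isOpen_ne.preimage (by continuity)
    have h2 : ContinuousOn g {y : ℝ | 1 + t * y ≠ 0} :=
      ContinuousOn.div continuousOn_id (by fun_prop) (fun y hy => hy)
    have := h2.isOpen_inter_preimage h1 (isOpen_Ioo (a := a) (b := b))
    convert this using 1
    rfl
  have hmem : {y : ℝ | 1 + t * y ≠ 0 ∧ g y ∈ Set.Ioo a b} ∈ nhds x :=
    hSopen.mem_nhds ⟨hwx, hgx⟩
  have heq : deriv v =ᶠ[nhds x] V1 := by
    filter_upwards [hmem] with y hy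
    exact (hv1 y hy.1 hy.2).deriv
  have hud : HasDerivAt u (deriv u (g x)) (g x) := (hu₁ _ hgx).hasDerivAt
  have hudd : HasDerivAt (deriv u) (deriv (deriv u) (g x)) (g x) := (hu₂ _ hgx).hasDerivAt
  have comp : HasDerivAt (fun z => u (g z)) (deriv u (g x) * (1 / (1 + t * x) ^ 2)) x :=
    hud.comp x (hgd x hwx)
  have comp' : HasDerivAt (fun z => deriv u (g z))
      (deriv (deriv u) (g x) * (1 / (1 + t * x) ^ 2)) x := hudd.comp x (hgd x hwx)
  have hpow3 : HasDerivAt (fun z => (1 + t * z) ^ 3) (3 * (1 + t * x) ^ 2 * t) x := by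
    simpa using (hwd x).fun_pow 3
  have hpow2 : HasDerivAt (fun z => (1 + t * z) ^ 2) (2 * (1 + t * x) ^ 1 * t) x := by
    simpa using (hwd x).fun_pow 2
  have hw3 : (1 + t * x) ^ 3 ≠ 0 := pow_ne_zero _ hwx
  have hw2 : (1 + t * x) ^ 2 ≠ 0 := pow_ne_zero _ hwx
  have hterm1 := comp'.fun_div hpow3 hw3
  have hterm2 : HasDerivAt (fun y => t * u (g y) / (1 + t * y) ^ 2)
      (t * ((deriv u (g x) * (1 / (1 + t * x) ^ 2) * (1 + t * x) ^ 2
        - u (g x) * (2 * (1 + t * x) ^ 1 * t)) / ((1 + t * x) ^ 2) ^ 2)) x := by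
    simpa [mul_div_assoc] using (comp.fun_div hpow2 hw2).const_mul t
  have hV2 : HasDerivAt V1
      (deriv (deriv u) (g x) / (1 + t * x) ^ 5 - 4 * t * deriv u (g x) / (1 + t * x) ^ 4
        + 2 * t ^ 2 * u (g x) / (1 + t * x) ^ 3) x := by
    have := hterm1.sub hterm2
    exact this.congr_deriv (key2 t (u (g x)) (deriv u (g x)) (deriv (deriv u) (g x)) _ hwx).symm
  have hdvv : HasDerivAt (deriv v)
      (deriv (deriv u) (g x) / (1 + t * x) ^ 5 - 4 * t * deriv u (g x) / (1 + t * x) ^ 4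
        + 2 * t ^ 2 * u (g x) / (1 + t * x) ^ 3) x :=
    hV2.congr_of_eventuallyEq heq
  have hdv1 : deriv v x = V1 x := (hv1 x hwx hgx).deriv
  refine ⟨(hv1 x hwx hgx).differentiableAt, hdvv.differentiableAt, ?_⟩
  rw [hdvv.deriv, hdv1, hV1def, hv]
  exact key3 t (u (g x)) (deriv u (g x)) (deriv (deriv u) (g x)) _ hwx (hode _ hgx)
end

section
/- Fix t ∈ ℝ and let u : ℝ → ℝ be twice differentiable on an open interval I with u(x)·u″(x) = 2·(u′(x))² and 1 − t·x·u(x) ≠ 0 for all x ∈ I. Then the function v(x) = u(x)/(1 − t·x·u(x)) is twice differentiable on I and satisfies v(x)·v″(x) = 2·(v′(x))² for all x ∈ I. (This expresses that x y²∂_y is a point symmetry of the ODE y y″ = 2 (y′)².) -/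
private lemma key_algebra (U U' U'' t x : ℝ) (hode : U * U'' = 2 * U' ^ 2)
    (hw : 1 - t * x * U ≠ 0) :
    (U / (1 - t * x * U)) *
      (((U'' + 2 * t * U * U') * ((1 - t * x * U) ^ 2) -
        (U' + t * U ^ 2) * (2 * (1 - t * x * U) * (-(t * U + t * x * U')))) /
        ((1 - t * x * U) ^ 2) ^ 2) =
      2 * ((U' + t * U ^ 2) / (1 - t * x * U) ^ 2) ^ 2 := by
  field_simp
  congr 1
  linear_combination (1 - t*x*U) * hode

/-- `xy²∂_y` is a point symmetry of the ODE `y y″ = 2 (y′)²`: the transformed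
solution `v(x) = u(x)/(1 − t·x·u(x))` again satisfies the equation. -/
theorem xy_sq_dy_symmetry_of_yy''_eq_2y'sq (t : ℝ) (a b : ℝ) (u : ℝ → ℝ)
    (hu₁ : ∀ x ∈ Set.Ioo a b, DifferentiableAt ℝ u x)
    (hu₂ : ∀ x ∈ Set.Ioo a b, DifferentiableAt ℝ (deriv u) x)
    (hode : ∀ x ∈ Set.Ioo a b, u x * deriv (deriv u) x = 2 * (deriv u x) ^ 2)
    (hne : ∀ x ∈ Set.Ioo a b, 1 - t * x * u x ≠ 0)
    (v : ℝ → ℝ)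
    (hv : v = fun x => u x / (1 - t * x * u x)) :
    ∀ x ∈ Set.Ioo a b,
      DifferentiableAt ℝ v x ∧ DifferentiableAt ℝ (deriv v) x ∧
      v x * deriv (deriv v) x = 2 * (deriv v x) ^ 2 := by
  have hopen : IsOpen (Set.Ioo a b) := isOpen_Ioo
  -- denominator
  set w : ℝ → ℝ := fun x => 1 - t * x * u x with hw
  have hdw : ∀ x ∈ Set.Ioo a b,
      HasDerivAt w (-(t * u x + t * x * deriv u x)) x := by
    intro x hx
    have h1 : HasDerivAt (fun y : ℝ => t * y) t x := by
      simpa using (hasDerivAt_id x).const_mul t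
    have h2 := h1.mul (hu₁ x hx).hasDerivAt
    have h3 := (hasDerivAt_const x (1:ℝ)).sub h2
    exact h3.congr_deriv (by ring)
  have hdiag : ∀ x ∈ Set.Ioo a b,
      HasDerivAt v ((deriv u x + t * u x ^ 2) / (w x) ^ 2) x := by
    intro x hx
    have h := (hu₁ x hx).hasDerivAt.div (hdw x hx) (hne x hx)
    have : v = fun y => u y / w y := by simp [hv, hw]
    rw [this]
    refine h.congr_deriv ?_
    have hw0 := hne x hx
    field_simp [hw]
    ring
  have hdv : ∀ x ∈ Set.Ioo a b,
      deriv v x = (deriv u x + t * u x ^ 2) / (w x) ^ 2 :=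
    fun x hx => (hdiag x hx).deriv
  intro x hx
  have hvdiff : DifferentiableAt ℝ v x := (hdiag x hx).differentiableAt
  -- g is the formula for deriv v, valid on the interval
  set g : ℝ → ℝ := fun y => (deriv u y + t * u y ^ 2) / (w y) ^ 2 with hg
  have heq : deriv v =ᶠ[nhds x] g := by
    filter_upwards [hopen.mem_nhds hx] with y hy
    exact hdv y hy
  have hdg : HasDerivAt g
      (((deriv (deriv u) x + 2 * t * u x * deriv u x) * (w x ^ 2) -
        (deriv u x + t * u x ^ 2) * (2 * w x * (-(t * u x + t * x * deriv u x)))) /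
        (w x ^ 2) ^ 2) x := by
    have hN : HasDerivAt (fun y => deriv u y + t * u y ^ 2)
        (deriv (deriv u) x + 2 * t * u x * deriv u x) x := by
      have h1 := (hu₂ x hx).hasDerivAt
      have h2 : HasDerivAt (fun y => t * u y ^ 2) (2 * t * u x * deriv u x) x := by
        have := ((hu₁ x hx).hasDerivAt.pow 2).const_mul t
        simpa using this.congr_deriv (by ring)
      exact h1.add h2
    have hD : HasDerivAt (fun y => (w y) ^ 2)
        (2 * w x * (-(t * u x + t * x * deriv u x))) x := by
      have := (hdw x hx).pow 2
      exact this.congr_deriv (by ring)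
    have hD0 : (w x) ^ 2 ≠ 0 := pow_ne_zero 2 (hne x hx)
    exact hN.div hD hD0
  have hdv2 : deriv (deriv v) x = deriv g x := heq.deriv_eq
  refine ⟨hvdiff, ?_, ?_⟩
  · exact hdg.differentiableAt.congr_of_eventuallyEq heq
  · rw [hdv2, hdg.deriv, hdv x hx, hv]
    exact key_algebra (u x) (deriv u x) (deriv (deriv u) x) t x (hode x hx) (hne x hx)
end

section
/- Consider the five vector fields on ℝ² given by W₁(x,y) = (x,0), W₂(x,y) = (0,y), W₃(x,y) = (0,y²), W₄(x,y) = (0, x³y²), W₅(x,y) = (x⁴, −3x³y). Then W₁,…,W₅ are linearly independent over ℝ (as functions ℝ² → ℝ²), and their ℝ-linear span is closed under the Lie bracket of vector fields; in particular this span is a 5-dimensional real Lie algebra of vector fields (the point symmetry algebra of the ODE x y y″ = 2 y′ (x y′ + y)). -/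
open Module

namespace SymXyyAux

def V0 : ℝ×ℝ → ℝ×ℝ := fun p => (p.1, 0)
def V1 : ℝ×ℝ → ℝ×ℝ := fun p => (0, p.2)
def V2 : ℝ×ℝ → ℝ×ℝ := fun p => (0, p.2 ^ 2)
def V3 : ℝ×ℝ → ℝ×ℝ := fun p => (0, p.1 ^ 3 * p.2 ^ 2)
def V4 : ℝ×ℝ → ℝ×ℝ := fun p => (p.1 ^ 4, -(3 * p.1 ^ 3 * p.2))

lemma d0 : Differentiable ℝ V0 := by unfold V0; fun_prop
lemma d1 : Differentiable ℝ V1 := by unfold V1; fun_prop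
lemma d2 : Differentiable ℝ V2 := by unfold V2; fun_prop
lemma d3 : Differentiable ℝ V3 := by unfold V3; fun_prop
lemma d4 : Differentiable ℝ V4 := by unfold V4; fun_prop

lemma fd0 (x v : ℝ×ℝ) : fderiv ℝ V0 x v = (v.1, 0) := by
  have e : V0 = fun p : ℝ×ℝ => (p.1, (0:ℝ)) := rfl
  rw [e, ((hasFDerivAt_fst.prodMk (hasFDerivAt_const (0:ℝ) x)) : HasFDerivAt _ _ x).fderiv]
  simp

lemma fd1 (x v : ℝ×ℝ) : fderiv ℝ V1 x v = (0, v.2) := by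
  have e : V1 = fun p : ℝ×ℝ => ((0:ℝ), p.2) := rfl
  rw [e, (((hasFDerivAt_const (0:ℝ) x).prodMk hasFDerivAt_snd) : HasFDerivAt _ _ x).fderiv]
  simp

lemma fd2 (x v : ℝ×ℝ) : fderiv ℝ V2 x v = (0, 2 * x.2 * v.2) := by
  have e : V2 = fun p : ℝ×ℝ => ((0:ℝ), p.2 * p.2) := by funext p; simp [V2]; ring
  rw [e, (((hasFDerivAt_const (0:ℝ) x).prodMk (hasFDerivAt_snd.mul hasFDerivAt_snd)) :
    HasFDerivAt _ _ x).fderiv]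
  refine Prod.ext ?_ ?_ <;> simp <;> ring

lemma fd3 (x v : ℝ×ℝ) : fderiv ℝ V3 x v = (0, 3*x.1^2*x.2^2*v.1 + 2*x.1^3*x.2*v.2) := by
  have e : V3 = fun p : ℝ×ℝ => ((0:ℝ), p.1*p.1*p.1*(p.2*p.2)) := by funext p; simp [V3]; ring
  rw [e, (((hasFDerivAt_const (0:ℝ) x).prodMk
    (((hasFDerivAt_fst.mul hasFDerivAt_fst).mul hasFDerivAt_fst).mul
      (hasFDerivAt_snd.mul hasFDerivAt_snd))) : HasFDerivAt _ _ x).fderiv]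
  refine Prod.ext ?_ ?_ <;> simp <;> ring

lemma fd4 (x v : ℝ×ℝ) : fderiv ℝ V4 x v = (4*x.1^3*v.1, -(9*x.1^2*x.2*v.1 + 3*x.1^3*v.2)) := by
  have e : V4 = fun p : ℝ×ℝ => (p.1*p.1*(p.1*p.1), -(3*(p.1*p.1*p.1)*p.2)) := by
    funext p; refine Prod.ext ?_ ?_ <;> simp only [V4] <;> ring
  rw [e, ((((hasFDerivAt_fst.mul hasFDerivAt_fst).mul (hasFDerivAt_fst.mul hasFDerivAt_fst)).prodMk
    ((((hasFDerivAt_fst.mul hasFDerivAt_fst).mul hasFDerivAt_fst).const_mul (3:ℝ)).mul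
      hasFDerivAt_snd).neg) :
    HasFDerivAt (fun p : ℝ×ℝ => (p.1*p.1*(p.1*p.1), -(3*(p.1*p.1*p.1)*p.2))) _ x).fderiv]
  refine Prod.ext ?_ ?_ <;> simp <;> ring

lemma b01 : VectorField.lieBracket ℝ V0 V1 = 0 := by
  funext x
  simp only [VectorField.lieBracket, fd0, fd1, V0, V1, Pi.zero_apply, Prod.mk_sub_mk]
  refine Prod.ext ?_ ?_ <;> simp
lemma b02 : VectorField.lieBracket ℝ V0 V2 = 0 := by
  funext x
  simp only [VectorField.lieBracket, fd0, fd2, V0, V2, Pi.zero_apply, Prod.mk_sub_mk]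
  refine Prod.ext ?_ ?_ <;> simp
lemma b03 : VectorField.lieBracket ℝ V0 V3 = (3:ℝ) • V3 := by
  funext x
  simp only [VectorField.lieBracket, fd0, fd3, V0, V3, Pi.smul_apply, Prod.smul_mk,
    smul_eq_mul, Prod.mk_sub_mk]
  refine Prod.ext ?_ ?_ <;> simp <;> ring
lemma b04 : VectorField.lieBracket ℝ V0 V4 = (3:ℝ) • V4 := by
  funext x
  simp only [VectorField.lieBracket, fd0, fd4, V0, V4, Pi.smul_apply, Prod.smul_mk,
    smul_eq_mul, Prod.mk_sub_mk]
  refine Prod.ext ?_ ?_ <;> simp <;> ring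
lemma b12 : VectorField.lieBracket ℝ V1 V2 = V2 := by
  funext x
  simp only [VectorField.lieBracket, fd1, fd2, V1, V2, Prod.mk_sub_mk]
  refine Prod.ext ?_ ?_ <;> simp <;> ring
lemma b13 : VectorField.lieBracket ℝ V1 V3 = V3 := by
  funext x
  simp only [VectorField.lieBracket, fd1, fd3, V1, V3, Prod.mk_sub_mk]
  refine Prod.ext ?_ ?_ <;> simp <;> ring
lemma b14 : VectorField.lieBracket ℝ V1 V4 = 0 := by
  funext x
  simp only [VectorField.lieBracket, fd1, fd4, V1, V4, Pi.zero_apply, Prod.mk_sub_mk]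
  refine Prod.ext ?_ ?_ <;> simp <;> ring
lemma b23 : VectorField.lieBracket ℝ V2 V3 = 0 := by
  funext x
  simp only [VectorField.lieBracket, fd2, fd3, V2, V3, Pi.zero_apply, Prod.mk_sub_mk]
  refine Prod.ext ?_ ?_ <;> simp <;> ring
lemma b24 : VectorField.lieBracket ℝ V2 V4 = (3:ℝ) • V3 := by
  funext x
  simp only [VectorField.lieBracket, fd2, fd4, V2, V3, V4, Pi.smul_apply, Prod.smul_mk,
    smul_eq_mul, Prod.mk_sub_mk]
  refine Prod.ext ?_ ?_ <;> simp <;> ring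
lemma b34 : VectorField.lieBracket ℝ V3 V4 = 0 := by
  funext x
  simp only [VectorField.lieBracket, fd3, fd4, V3, V4, Pi.zero_apply, Prod.mk_sub_mk]
  refine Prod.ext ?_ ?_ <;> simp <;> ring

lemma bswap (A B : ℝ×ℝ → ℝ×ℝ) :
    VectorField.lieBracket ℝ A B = -(VectorField.lieBracket ℝ B A) := by
  funext x
  rw [VectorField.lieBracket_swap, Pi.neg_apply]

lemma lieBracket_sum_sum {ι : Type*} [Fintype ι] (F : ι → (ℝ×ℝ → ℝ×ℝ))
    (hF : ∀ i, Differentiable ℝ (F i)) (a b : ι → ℝ) :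
    VectorField.lieBracket ℝ (∑ i, a i • F i) (∑ j, b j • F j) =
      ∑ i, ∑ j, (a i * b j) • VectorField.lieBracket ℝ (F i) (F j) := by
  classical
  have hs : ∀ (c : ι → ℝ), (∑ i, c i • F i) = fun y => ∑ i, c i • F i y := by
    intro c; funext y; simp
  have hd : ∀ (c : ι → ℝ) (y : ℝ×ℝ),
      fderiv ℝ (fun z => ∑ i, c i • F i z) y = ∑ i, c i • fderiv ℝ (F i) y := by
    intro c y
    rw [fderiv_fun_sum (A := fun i z => c i • F i z) (fun i _ => (hF i y).const_smul (c i))]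
    exact Finset.sum_congr rfl fun i _ => fderiv_fun_const_smul (hF i y) (c i)
  funext x
  simp only [VectorField.lieBracket_eq, hs, hd, Finset.sum_apply, Pi.smul_apply,
    ContinuousLinearMap.sum_apply, ContinuousLinearMap.smul_apply, map_sum, map_smul,
    Finset.smul_sum, smul_sub, smul_smul, Finset.sum_sub_distrib]
  congr 1
  rw [Finset.sum_comm]
  exact Finset.sum_congr rfl fun i _ => Finset.sum_congr rfl fun j _ => by
    rw [mul_comm (b j) (a i)]

end SymXyyAux

open SymXyyAux in
/-- The five vector fields `x∂ₓ, y∂_y, y²∂_y, x³y²∂_y, x⁴∂ₓ − 3x³y∂_y`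
(point symmetries of the ODE `x y y″ = 2 y′ (x y′ + y)`) are linearly
independent and their span is closed under the Lie bracket of vector fields,
hence forms a 5-dimensional real Lie algebra of vector fields. -/
theorem symmetry_algebra_of_xyy''_eq_2y'_xy'_plus_y
    (W : Fin 5 → (ℝ × ℝ → ℝ × ℝ))
    (hW : W = ![fun p => (p.1, 0),
                fun p => (0, p.2),
                fun p => (0, p.2 ^ 2),
                fun p => (0, p.1 ^ 3 * p.2 ^ 2),
                fun p => (p.1 ^ 4, -(3 * p.1 ^ 3 * p.2))]) :
    LinearIndependent ℝ W ∧
    (∀ A B : ℝ × ℝ → ℝ × ℝ, A ∈ Submodule.span ℝ (Set.range W) →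
      B ∈ Submodule.span ℝ (Set.range W) →
      VectorField.lieBracket ℝ A B ∈ Submodule.span ℝ (Set.range W)) ∧
    Module.finrank ℝ (Submodule.span ℝ (Set.range W)) = 5 := by
  have hWF : W = ![V0, V1, V2, V3, V4] := hW
  subst hWF
  set F : Fin 5 → (ℝ × ℝ → ℝ × ℝ) := ![V0, V1, V2, V3, V4] with hF
  have hdiff : ∀ i, Differentiable ℝ (F i) := by
    intro i
    fin_cases i
    · exact d0
    · exact d1
    · exact d2
    · exact d3
    · exact d4
  -- linear independence
  have hLI : LinearIndependent ℝ F := by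
    rw [Fintype.linearIndependent_iff]
    intro g hg
    have h : ∀ p : ℝ × ℝ, (∑ i, g i • F i) p = 0 := fun p => congrFun hg p
    simp only [Fin.sum_univ_five, hF, Matrix.cons_val_zero, Matrix.cons_val_one,
      Matrix.head_cons, Matrix.cons_val_two, Matrix.tail_cons, Matrix.cons_val_three,
      Matrix.cons_val_four, V0, V1, V2, V3, V4, Pi.add_apply, Pi.smul_apply,
      Prod.smul_mk, smul_eq_mul, Prod.mk_add_mk, Prod.mk.injEq, Pi.zero_apply,
      Prod.fst_zero, Prod.snd_zero] at h
    have h1 := h (1, 0)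
    have h2 := h (2, 0)
    have h3 := h (0, 1)
    have h4 := h (0, 2)
    have h5 := h (1, 1)
    norm_num at h1 h2 h3 h4 h5
    intro i
    fin_cases i <;> simp <;> linarith [h1, h2, h3, h4, h5.1, h5.2]
  refine ⟨hLI, ?_, ?_⟩
  · -- closure under the bracket
    have hmemV : ∀ k : Fin 5, F k ∈ Submodule.span ℝ (Set.range F) := fun k =>
      Submodule.subset_span ⟨k, rfl⟩
    have m0 : V0 ∈ Submodule.span ℝ (Set.range F) := hmemV 0
    have m1 : V1 ∈ Submodule.span ℝ (Set.range F) := hmemV 1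
    have m2 : V2 ∈ Submodule.span ℝ (Set.range F) := hmemV 2
    have m3 : V3 ∈ Submodule.span ℝ (Set.range F) := hmemV 3
    have m4 : V4 ∈ Submodule.span ℝ (Set.range F) := hmemV 4
    have hbr : ∀ i j, VectorField.lieBracket ℝ (F i) (F j) ∈ Submodule.span ℝ (Set.range F) := by
      intro i j
      fin_cases i <;> fin_cases j
      · show VectorField.lieBracket ℝ V0 V0 ∈ Submodule.span ℝ (Set.range F)
        rw [VectorField.lieBracket_self]; exact Submodule.zero_mem _
      · show VectorField.lieBracket ℝ V0 V1 ∈ Submodule.span ℝ (Set.range F)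
        rw [b01]; exact Submodule.zero_mem _
      · show VectorField.lieBracket ℝ V0 V2 ∈ Submodule.span ℝ (Set.range F)
        rw [b02]; exact Submodule.zero_mem _
      · show VectorField.lieBracket ℝ V0 V3 ∈ Submodule.span ℝ (Set.range F)
        rw [b03]; exact Submodule.smul_mem _ _ m3
      · show VectorField.lieBracket ℝ V0 V4 ∈ Submodule.span ℝ (Set.range F)
        rw [b04]; exact Submodule.smul_mem _ _ m4
      · show VectorField.lieBracket ℝ V1 V0 ∈ Submodule.span ℝ (Set.range F)
        rw [bswap, b01]; simpa using Submodule.zero_mem _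
      · show VectorField.lieBracket ℝ V1 V1 ∈ Submodule.span ℝ (Set.range F)
        rw [VectorField.lieBracket_self]; exact Submodule.zero_mem _
      · show VectorField.lieBracket ℝ V1 V2 ∈ Submodule.span ℝ (Set.range F)
        rw [b12]; exact m2
      · show VectorField.lieBracket ℝ V1 V3 ∈ Submodule.span ℝ (Set.range F)
        rw [b13]; exact m3
      · show VectorField.lieBracket ℝ V1 V4 ∈ Submodule.span ℝ (Set.range F)
        rw [b14]; exact Submodule.zero_mem _
      · show VectorField.lieBracket ℝ V2 V0 ∈ Submodule.span ℝ (Set.range F)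
        rw [bswap, b02]; simpa using Submodule.zero_mem _
      · show VectorField.lieBracket ℝ V2 V1 ∈ Submodule.span ℝ (Set.range F)
        rw [bswap, b12]; exact Submodule.neg_mem _ m2
      · show VectorField.lieBracket ℝ V2 V2 ∈ Submodule.span ℝ (Set.range F)
        rw [VectorField.lieBracket_self]; exact Submodule.zero_mem _
      · show VectorField.lieBracket ℝ V2 V3 ∈ Submodule.span ℝ (Set.range F)
        rw [b23]; exact Submodule.zero_mem _
      · show VectorField.lieBracket ℝ V2 V4 ∈ Submodule.span ℝ (Set.range F)
        rw [b24]; exact Submodule.smul_mem _ _ m3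
      · show VectorField.lieBracket ℝ V3 V0 ∈ Submodule.span ℝ (Set.range F)
        rw [bswap, b03]; exact Submodule.neg_mem _ (Submodule.smul_mem _ _ m3)
      · show VectorField.lieBracket ℝ V3 V1 ∈ Submodule.span ℝ (Set.range F)
        rw [bswap, b13]; exact Submodule.neg_mem _ m3
      · show VectorField.lieBracket ℝ V3 V2 ∈ Submodule.span ℝ (Set.range F)
        rw [bswap, b23]; simpa using Submodule.zero_mem _
      · show VectorField.lieBracket ℝ V3 V3 ∈ Submodule.span ℝ (Set.range F)
        rw [VectorField.lieBracket_self]; exact Submodule.zero_mem _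
      · show VectorField.lieBracket ℝ V3 V4 ∈ Submodule.span ℝ (Set.range F)
        rw [b34]; exact Submodule.zero_mem _
      · show VectorField.lieBracket ℝ V4 V0 ∈ Submodule.span ℝ (Set.range F)
        rw [bswap, b04]; exact Submodule.neg_mem _ (Submodule.smul_mem _ _ m4)
      · show VectorField.lieBracket ℝ V4 V1 ∈ Submodule.span ℝ (Set.range F)
        rw [bswap, b14]; simpa using Submodule.zero_mem _
      · show VectorField.lieBracket ℝ V4 V2 ∈ Submodule.span ℝ (Set.range F)
        rw [bswap, b24]; exact Submodule.neg_mem _ (Submodule.smul_mem _ _ m3)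
      · show VectorField.lieBracket ℝ V4 V3 ∈ Submodule.span ℝ (Set.range F)
        rw [bswap, b34]; simpa using Submodule.zero_mem _
      · show VectorField.lieBracket ℝ V4 V4 ∈ Submodule.span ℝ (Set.range F)
        rw [VectorField.lieBracket_self]; exact Submodule.zero_mem _
    intro A B hA hB
    rw [Submodule.mem_span_range_iff_exists_fun] at hA hB
    obtain ⟨a, ha⟩ := hA
    obtain ⟨b, hb⟩ := hB
    rw [← ha, ← hb, lieBracket_sum_sum F hdiff a b]
    exact Submodule.sum_mem _ fun i _ => Submodule.sum_mem _ fun j _ =>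
      Submodule.smul_mem _ _ (hbr i j)
  · rw [finrank_span_eq_card hLI, Fintype.card_fin]
end

section
/- Fix t ∈ ℝ and let u : ℝ → ℝ be twice differentiable on an open interval I with x·u(x)·u″(x) = 2·u′(x)·(x·u′(x) + u(x)) and 1 − t·u(x) ≠ 0 for all x ∈ I. Then the function v(x) = u(x)/(1 − t·u(x)) is twice differentiable on I and satisfies x·v(x)·v″(x) = 2·v′(x)·(x·v′(x) + v(x)) for all x ∈ I. (This expresses that y²∂_y is a point symmetry of the ODE x y y″ = 2 y′ (x y′ + y).) -/
/-- `y²∂_y` is a point symmetry of the ODE `x y y″ = 2 y′ (x y′ + y)`: the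
transformed solution `v(x) = u(x)/(1 − t·u(x))` again satisfies the equation. -/
theorem y_sq_dy_symmetry_of_xyy''_ode (t : ℝ) (a b : ℝ) (u : ℝ → ℝ)
    (hu₁ : ∀ x ∈ Set.Ioo a b, DifferentiableAt ℝ u x)
    (hu₂ : ∀ x ∈ Set.Ioo a b, DifferentiableAt ℝ (deriv u) x)
    (hode : ∀ x ∈ Set.Ioo a b,
      x * u x * deriv (deriv u) x = 2 * deriv u x * (x * deriv u x + u x))
    (hne : ∀ x ∈ Set.Ioo a b, 1 - t * u x ≠ 0)
    (v : ℝ → ℝ)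
    (hv : v = fun x => u x / (1 - t * u x)) :
    ∀ x ∈ Set.Ioo a b,
      DifferentiableAt ℝ v x ∧ DifferentiableAt ℝ (deriv v) x ∧
      x * v x * deriv (deriv v) x = 2 * deriv v x * (x * deriv v x + v x) := by
  have hO : IsOpen (Set.Ioo a b) := isOpen_Ioo
  -- derivative of v on the interval
  have hvd : ∀ y ∈ Set.Ioo a b, HasDerivAt v (deriv u y / (1 - t * u y) ^ 2) y := by
    intro y hy
    have hu := (hu₁ y hy).hasDerivAt
    have hwd : HasDerivAt (fun z => 1 - t * u z) (-(t * deriv u y)) y := by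
      simpa using (hu.const_mul t).const_sub 1
    have h := hu.div hwd (hne y hy)
    rw [hv]
    exact h.congr_deriv (by field_simp; ring)
  intro x hx
  have hmem : Set.Ioo a b ∈ nhds x := hO.mem_nhds hx
  have hdveq : Set.EqOn (deriv v) (fun y => deriv u y / (1 - t * u y) ^ 2) (Set.Ioo a b) :=
    fun y hy => (hvd y hy).deriv
  have hfe : deriv v =ᶠ[nhds x] fun y => deriv u y / (1 - t * u y) ^ 2 :=
    Filter.eventuallyEq_of_mem hmem hdveq
  -- second derivative
  have hA := (hu₂ x hx).hasDerivAt
  have hu := (hu₁ x hx).hasDerivAt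
  have hwd : HasDerivAt (fun z => 1 - t * u z) (-(t * deriv u x)) x := by
    simpa using (hu.const_mul t).const_sub 1
  have hw2 : HasDerivAt (fun z => (1 - t * u z) ^ 2)
      ((2 : ℕ) * (1 - t * u x) ^ 1 * (-(t * deriv u x))) x := hwd.pow 2
  have hW2ne : (1 - t * u x) ^ 2 ≠ 0 := pow_ne_zero _ (hne x hx)
  have hg : HasDerivAt (fun y => deriv u y / (1 - t * u y) ^ 2)
      ((deriv (deriv u) x * (1 - t * u x) ^ 2 -
        deriv u x * ((2 : ℕ) * (1 - t * u x) ^ 1 * (-(t * deriv u x)))) /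
        ((1 - t * u x) ^ 2) ^ 2) x := hA.div hw2 hW2ne
  have hdv2 : HasDerivAt (deriv v)
      ((deriv (deriv u) x * (1 - t * u x) ^ 2 -
        deriv u x * ((2 : ℕ) * (1 - t * u x) ^ 1 * (-(t * deriv u x)))) /
        ((1 - t * u x) ^ 2) ^ 2) x := hg.congr_of_eventuallyEq hfe
  refine ⟨(hvd x hx).differentiableAt, hdv2.differentiableAt, ?_⟩
  rw [hdv2.deriv, (hvd x hx).deriv, hv]
  have hW := hne x hx
  field_simp
  linear_combination (1 - u x * t) / (1 - u x * t) ^ 4 * hode x hx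
end

section
/- Fix t ∈ ℝ and let u : ℝ → ℝ be twice differentiable on an open interval I with x·u(x)·u″(x) = 2·u′(x)·(x·u′(x) + u(x)) and 1 − t·x³·u(x) ≠ 0 for all x ∈ I. Then the function v(x) = u(x)/(1 − t·x³·u(x)) is twice differentiable on I and satisfies x·v(x)·v″(x) = 2·v′(x)·(x·v′(x) + v(x)) for all x ∈ I. (This expresses that x³y²∂_y is a point symmetry of the ODE x y y″ = 2 y′ (x y′ + y).) -/
/-- `x³y²∂_y` is a point symmetry of the ODE `x y y″ = 2 y′ (x y′ + y)`: the
transformed solution `v(x) = u(x)/(1 − t·x³·u(x))` again satisfies the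
equation. -/
theorem x3y_sq_dy_symmetry_of_xyy''_ode (t : ℝ) (a b : ℝ) (u : ℝ → ℝ)
    (hu₁ : ∀ x ∈ Set.Ioo a b, DifferentiableAt ℝ u x)
    (hu₂ : ∀ x ∈ Set.Ioo a b, DifferentiableAt ℝ (deriv u) x)
    (hode : ∀ x ∈ Set.Ioo a b,
      x * u x * deriv (deriv u) x = 2 * deriv u x * (x * deriv u x + u x))
    (hne : ∀ x ∈ Set.Ioo a b, 1 - t * x ^ 3 * u x ≠ 0)
    (v : ℝ → ℝ)
    (hv : v = fun x => u x / (1 - t * x ^ 3 * u x)) :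
    ∀ x ∈ Set.Ioo a b,
      DifferentiableAt ℝ v x ∧ DifferentiableAt ℝ (deriv v) x ∧
      x * v x * deriv (deriv v) x = 2 * deriv v x * (x * deriv v x + v x) := by
  intro x hx
  subst hv
  have hI : Set.Ioo a b ∈ nhds x := isOpen_Ioo.mem_nhds hx
  -- derivative of the denominator
  have hD : ∀ y ∈ Set.Ioo a b, HasDerivAt (fun z => 1 - t * z ^ 3 * u z)
      (-(t * (3 * y ^ 2 * u y + y ^ 3 * deriv u y))) y := by
    intro y hy
    have h1 : HasDerivAt (fun z => t * z ^ 3 * u z)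
        (t * (3 * y ^ 2 * u y + y ^ 3 * deriv u y)) y := by
      have h2 : HasDerivAt (fun z : ℝ => t * z ^ 3) (t * (3 * y ^ 2)) y := by
        simpa using (hasDerivAt_pow 3 y).const_mul t
      have := h2.fun_mul (hu₁ y hy).hasDerivAt
      exact this.congr_deriv (by ring)
    simpa using (hasDerivAt_const y (1:ℝ)).fun_sub h1
  -- first derivative of v
  have hv' : ∀ y ∈ Set.Ioo a b,
      HasDerivAt (fun z => u z / (1 - t * z ^ 3 * u z))
        ((deriv u y * (1 - t * y ^ 3 * u y)
          - u y * (-(t * (3 * y ^ 2 * u y + y ^ 3 * deriv u y))))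
          / (1 - t * y ^ 3 * u y) ^ 2) y := by
    intro y hy
    exact (hu₁ y hy).hasDerivAt.div (hD y hy) (hne y hy)
  have hdv : ∀ y ∈ Set.Ioo a b,
      deriv (fun z => u z / (1 - t * z ^ 3 * u z)) y
        = (deriv u y * (1 - t * y ^ 3 * u y)
          - u y * (-(t * (3 * y ^ 2 * u y + y ^ 3 * deriv u y))))
          / (1 - t * y ^ 3 * u y) ^ 2 := fun y hy => (hv' y hy).deriv
  have heq : deriv (fun z => u z / (1 - t * z ^ 3 * u z)) =ᶠ[nhds x]
      fun y => (deriv u y * (1 - t * y ^ 3 * u y)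
          - u y * (-(t * (3 * y ^ 2 * u y + y ^ 3 * deriv u y))))
          / (1 - t * y ^ 3 * u y) ^ 2 :=
    Filter.eventuallyEq_of_mem hI hdv
  -- the explicit first-derivative function is differentiable at x
  have hNum : HasDerivAt (fun y => deriv u y * (1 - t * y ^ 3 * u y)
          - u y * (-(t * (3 * y ^ 2 * u y + y ^ 3 * deriv u y))))
      ((deriv (deriv u) x * (1 - t * x ^ 3 * u x)
        + deriv u x * (-(t * (3 * x ^ 2 * u x + x ^ 3 * deriv u x))))
        - (deriv u x * (-(t * (3 * x ^ 2 * u x + x ^ 3 * deriv u x)))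
          + u x * (-(t * ((6 * x * u x + 3 * x ^ 2 * deriv u x)
            + (3 * x ^ 2 * deriv u x + x ^ 3 * deriv (deriv u) x)))))) x := by
    have hu' := (hu₁ x hx).hasDerivAt
    have hu'' := (hu₂ x hx).hasDerivAt
    have hA : HasDerivAt (fun y => 3 * y ^ 2 * u y + y ^ 3 * deriv u y)
        ((6 * x * u x + 3 * x ^ 2 * deriv u x)
          + (3 * x ^ 2 * deriv u x + x ^ 3 * deriv (deriv u) x)) x := by
      have h1 : HasDerivAt (fun y : ℝ => 3 * y ^ 2) (6 * x) x := by
        have := (hasDerivAt_pow 2 x).const_mul (3:ℝ)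
        exact this.congr_deriv (by ring)
      have h2 := (hasDerivAt_pow 3 x).fun_mul hu''
      have := (h1.fun_mul hu').fun_add h2
      exact this.congr_deriv (by ring)
    have := (hu''.fun_mul (hD x hx)).fun_sub (hu'.fun_mul ((hA.const_mul t).fun_neg))
    exact this.congr_deriv (by ring)
  have hV1 := hNum.fun_div ((hD x hx).fun_pow 2) (pow_ne_zero 2 (hne x hx))
  have hdv2 : HasDerivAt (deriv (fun z => u z / (1 - t * z ^ 3 * u z))) _ x :=
    hV1.congr_of_eventuallyEq heq
  refine ⟨(hv' x hx).differentiableAt, hdv2.differentiableAt, ?_⟩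
  rw [hdv2.deriv, hdv x hx]
  simp only
  have hD0 := hne x hx
  field_simp
  have hD1 : 1 - x ^ 3 * u x * t ≠ 0 := by intro h; apply hD0; linear_combination h
  rw [div_eq_div_iff (pow_ne_zero _ hD1) (pow_ne_zero _ hD1)]
  linear_combination (1 - t * x ^ 3 * u x) ^ 6 * hode x hx
end
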